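/- Let T be a triangular bounded cell of a simple arrangement L of lines in ℝ², formed by lines p, q, r, and suppose every line of L contains an edge of a fixed convex cell P of L with at least 5 edges. Then T and P share a common edge: some maximal boundary segment of T equals a maximal boundary segment of P. -/

import Mathlib

open Set

/-- A line in the real plane `ℝ × ℝ`, given by the equation `a*x + b*y = c`
with `(a, b) ≠ (0, 0)`. -/
structure Line2 where
  a : ℝ
  b : ℝ
  c : ℝ
  nondeg : (a, b) ≠ (0, 0)

/-- The set of points of a line. -/
def Line2.carrier (ℓ : Line2) : Set (ℝ × ℝ) :=
  {p | ℓ.a * p.1 + ℓ.b * p.2 = ℓ.c}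

/-- Two lines are parallel if their normal vectors are proportional
(this includes the case of equal lines). -/
def Line2.Parallel (ℓ₁ ℓ₂ : Line2) : Prop :=
  ℓ₁.a * ℓ₂.b = ℓ₂.a * ℓ₁.b

/-- A simple arrangement: a finite set of lines, pairwise non-parallel,
no point on three (or more) of the lines. -/
def IsSimpleArrangement (L : Finset Line2) : Prop :=
  (∀ ℓ₁ ∈ L, ∀ ℓ₂ ∈ L, ℓ₁ ≠ ℓ₂ → ¬ Line2.Parallel ℓ₁ ℓ₂) ∧
  (∀ ℓ₁ ∈ L, ∀ ℓ₂ ∈ L, ∀ ℓ₃ ∈ L, ℓ₁ ≠ ℓ₂ → ℓ₁ ≠ ℓ₃ → ℓ₂ ≠ ℓ₃ →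
    ∀ p : ℝ × ℝ, ¬(p ∈ ℓ₁.carrier ∧ p ∈ ℓ₂.carrier ∧ p ∈ ℓ₃.carrier))

/-- The union of the lines of an arrangement. -/
def linesUnion (L : Finset Line2) : Set (ℝ × ℝ) := ⋃ ℓ ∈ L, ℓ.carrier

/-- A cell of the arrangement determined by a closed set `S` of "forbidden" points:
a connected component of the complement of `S`. -/
def IsCellOf (S : Set (ℝ × ℝ)) (C : Set (ℝ × ℝ)) : Prop :=
  ∃ x, x ∉ S ∧ C = connectedComponentIn Sᶜ x

/-- A cell of a line arrangement: a connected component of the complement of the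
union of the lines. -/
def IsCell (L : Finset Line2) (C : Set (ℝ × ℝ)) : Prop :=
  IsCellOf (linesUnion L) C

/-- A set is a (closed, nondegenerate) triangle. -/
def IsTriangleSet (T : Set (ℝ × ℝ)) : Prop :=
  ∃ u v w : ℝ × ℝ, ¬ Collinear ℝ ({u, v, w} : Set (ℝ × ℝ)) ∧
    T = convexHull ℝ ({u, v, w} : Set (ℝ × ℝ))

/-- An edge of (the closure of) a polygonal region `P`: a maximal nondegenerate
segment contained in the frontier of `P`. -/
def IsEdge (P : Set (ℝ × ℝ)) (e : Set (ℝ × ℝ)) : Prop :=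
  ∃ x y : ℝ × ℝ, x ≠ y ∧ e = segment ℝ x y ∧ e ⊆ frontier P ∧
    ∀ x' y' : ℝ × ℝ, e ⊆ segment ℝ x' y' → segment ℝ x' y' ⊆ frontier P →
      segment ℝ x' y' = e

namespace Stmt18Aux


noncomputable def lf (ℓ : Line2) (z : ℝ × ℝ) : ℝ := ℓ.a * z.1 + ℓ.b * z.2 - ℓ.c

lemma lf_carrier {ℓ : Line2} {z : ℝ × ℝ} : z ∈ ℓ.carrier ↔ lf ℓ z = 0 := by
  simp [Line2.carrier, lf, sub_eq_zero]

lemma lf_cont (ℓ : Line2) : Continuous (lf ℓ) := by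
  unfold lf; fun_prop

lemma smul_fst (a : ℝ) (z : ℝ × ℝ) : (a • z).1 = a * z.1 := rfl
lemma smul_snd (a : ℝ) (z : ℝ × ℝ) : (a • z).2 = a * z.2 := rfl

lemma lf_combo {ℓ : Line2} {a b : ℝ} (h : a + b = 1) (z₁ z₂ : ℝ × ℝ) :
    lf ℓ (a • z₁ + b • z₂) = a * lf ℓ z₁ + b * lf ℓ z₂ := by
  have hb : b = 1 - a := by linarith
  subst hb
  simp only [lf, Prod.fst_add, Prod.snd_add, smul_fst, smul_snd]
  ring

lemma lf_param (ℓ : Line2) (A B : ℝ × ℝ) (t : ℝ) :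
    lf ℓ (A + t • (B - A)) = lf ℓ A + t * (lf ℓ B - lf ℓ A) := by
  simp only [lf, Prod.fst_add, Prod.snd_add, smul_fst, smul_snd, Prod.fst_sub, Prod.snd_sub]
  ring

lemma nondeg' (ℓ : Line2) : ℓ.a ≠ 0 ∨ ℓ.b ≠ 0 := by
  by_contra h
  push_neg at h
  exact ℓ.nondeg (by simp [h.1, h.2])

/-- two lines sharing two distinct points are parallel -/
lemma parallel_of_two {ℓ m : Line2} {A B : ℝ × ℝ} (hAB : A ≠ B)
    (h1 : lf ℓ A = 0) (h2 : lf ℓ B = 0) (h3 : lf m A = 0) (h4 : lf m B = 0) :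
    Line2.Parallel ℓ m := by
  have hd : B.1 - A.1 ≠ 0 ∨ B.2 - A.2 ≠ 0 := by
    by_contra h
    push_neg at h
    exact hAB (Prod.ext (by linarith [h.1]) (by linarith [h.2]))
  have e1 : ℓ.a * (B.1 - A.1) + ℓ.b * (B.2 - A.2) = 0 := by
    simp only [lf] at h1 h2; ring_nf; linarith [h1, h2]
  have e2 : m.a * (B.1 - A.1) + m.b * (B.2 - A.2) = 0 := by
    simp only [lf] at h3 h4; ring_nf; linarith [h3, h4]
  have key1 : (ℓ.a * m.b - m.a * ℓ.b) * (B.1 - A.1) = 0 := by linear_combination m.b * e1 - ℓ.b * e2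
  have key2 : (ℓ.a * m.b - m.a * ℓ.b) * (B.2 - A.2) = 0 := by linear_combination ℓ.a * e2 - m.a * e1
  have : ℓ.a * m.b - m.a * ℓ.b = 0 := by
    rcases hd with h | h
    · exact (mul_eq_zero.mp key1).resolve_right h
    · exact (mul_eq_zero.mp key2).resolve_right h
  unfold Line2.Parallel; linarith

/-- a point of a line through distinct points A B is A + t(B-A) -/
lemma line_param {m : Line2} {A B z : ℝ × ℝ} (hAB : A ≠ B)
    (hA : lf m A = 0) (hB : lf m B = 0) (hz : lf m z = 0) :
    ∃ t : ℝ, z = A + t • (B - A) := by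
  have hd : B.1 - A.1 ≠ 0 ∨ B.2 - A.2 ≠ 0 := by
    by_contra h
    push_neg at h
    exact hAB (Prod.ext (by linarith [h.1]) (by linarith [h.2]))
  have e1 : m.a * (B.1 - A.1) + m.b * (B.2 - A.2) = 0 := by
    simp only [lf] at hA hB; linarith [hA, hB]
  have e2 : m.a * (z.1 - A.1) + m.b * (z.2 - A.2) = 0 := by
    simp only [lf] at hA hz; linarith [hA, hz]
  have cross : (z.1 - A.1) * (B.2 - A.2) = (z.2 - A.2) * (B.1 - A.1) := by
    have k1 : m.a * ((z.1 - A.1) * (B.2 - A.2) - (z.2 - A.2) * (B.1 - A.1)) = 0 := by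
      linear_combination (B.2 - A.2) * e2 - (z.2 - A.2) * e1
    have k2 : m.b * ((z.1 - A.1) * (B.2 - A.2) - (z.2 - A.2) * (B.1 - A.1)) = 0 := by
      linear_combination (z.1 - A.1) * e1 - (B.1 - A.1) * e2
    rcases nondeg' m with h | h
    · have := (mul_eq_zero.mp k1).resolve_left h; linarith
    · have := (mul_eq_zero.mp k2).resolve_left h; linarith
  rcases hd with h | h
  · refine ⟨(z.1 - A.1) / (B.1 - A.1), Prod.ext ?_ ?_⟩
    · simp only [Prod.fst_add, smul_fst, Prod.fst_sub]; field_simp; ring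
    · simp only [Prod.snd_add, smul_snd, Prod.snd_sub]; field_simp
      nlinarith [cross]
  · refine ⟨(z.2 - A.2) / (B.2 - A.2), Prod.ext ?_ ?_⟩
    · simp only [Prod.fst_add, smul_fst, Prod.fst_sub]; field_simp
      nlinarith [cross]
    · simp only [Prod.snd_add, smul_snd, Prod.snd_sub]; field_simp; ring


noncomputable def det3 (u v w : ℝ × ℝ) : ℝ :=
  (v.1 - u.1) * (w.2 - u.2) - (v.2 - u.2) * (w.1 - u.1)

/-- three points on one line have zero determinant -/
lemma det3_zero_of_line {ℓ : Line2} {u v w : ℝ × ℝ}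
    (h1 : lf ℓ u = 0) (h2 : lf ℓ v = 0) (h3 : lf ℓ w = 0) : det3 u v w = 0 := by
  simp only [lf] at h1 h2 h3
  have e1 : ℓ.a * (v.1 - u.1) + ℓ.b * (v.2 - u.2) = 0 := by linarith
  have e2 : ℓ.a * (w.1 - u.1) + ℓ.b * (w.2 - u.2) = 0 := by linarith
  have k1 : ℓ.a * det3 u v w = 0 := by
    unfold det3; linear_combination (w.2 - u.2) * e1 - (v.2 - u.2) * e2
  have k2 : ℓ.b * det3 u v w = 0 := by
    unfold det3; linear_combination (v.1 - u.1) * e2 - (w.1 - u.1) * e1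
  rcases nondeg' ℓ with h | h
  · exact (mul_eq_zero.mp k1).resolve_left h
  · exact (mul_eq_zero.mp k2).resolve_left h

lemma collinear_of_det3 {u v w : ℝ × ℝ} (h : det3 u v w = 0) :
    Collinear ℝ ({u, v, w} : Set (ℝ × ℝ)) := by
  unfold det3 at h
  by_cases hv : v = u
  · -- direction w - u
    apply (collinear_iff_of_mem (show u ∈ ({u,v,w}:Set (ℝ×ℝ)) by simp)).mpr
    refine ⟨w - u, ?_⟩
    intro p hp
    simp only [Set.mem_insert_iff, Set.mem_singleton_iff] at hp
    rcases hp with h1 | h1 | h1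
    · exact ⟨0, by simp [h1]⟩
    · exact ⟨0, by simp [h1, hv]⟩
    · exact ⟨1, by simp [h1]⟩
  · apply (collinear_iff_of_mem (show u ∈ ({u,v,w}:Set (ℝ×ℝ)) by simp)).mpr
    refine ⟨v - u, ?_⟩
    intro p hp
    have hd : v.1 - u.1 ≠ 0 ∨ v.2 - u.2 ≠ 0 := by
      by_contra hh; push_neg at hh
      exact hv (Prod.ext (by linarith [hh.1]) (by linarith [hh.2]))
    simp only [Set.mem_insert_iff, Set.mem_singleton_iff] at hp
    rcases hp with h1 | h1 | h1
    · exact ⟨0, by simp [h1]⟩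
    · exact ⟨1, by simp [h1]⟩
    · subst h1
      rcases hd with hne | hne
      · refine ⟨(p.1 - u.1)/(v.1 - u.1), ?_⟩
        have : (p.2 - u.2) * (v.1 - u.1) = (v.2 - u.2) * (p.1 - u.1) := by linarith
        apply Prod.ext
        · simp only [vadd_eq_add, Prod.fst_add, Prod.fst_sub]
          show _ = (p.1 - u.1)/(v.1-u.1) * (v.1 - u.1) + u.1
          field_simp
          ring
        · simp only [vadd_eq_add, Prod.snd_add, Prod.snd_sub]
          show _ = (p.1 - u.1)/(v.1-u.1) * (v.2 - u.2) + u.2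
          field_simp
          nlinarith [this]
      · refine ⟨(p.2 - u.2)/(v.2 - u.2), ?_⟩
        have : (p.2 - u.2) * (v.1 - u.1) = (v.2 - u.2) * (p.1 - u.1) := by linarith
        apply Prod.ext
        · simp only [vadd_eq_add, Prod.fst_add, Prod.fst_sub]
          show _ = (p.2 - u.2)/(v.2-u.2) * (v.1 - u.1) + u.1
          field_simp
          nlinarith [this]
        · simp only [vadd_eq_add, Prod.snd_add, Prod.snd_sub]
          show _ = (p.2 - u.2)/(v.2-u.2) * (v.2 - u.2) + u.2
          field_simp
          ring

/-- sign transfer: a,b same side, c weakly on a's side → c weakly on b's side -/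
lemma sign_transfer {a b c : ℝ} (hab : 0 < a * b) (hca : 0 ≤ c * a) : 0 ≤ c * b := by
  by_contra h
  push_neg at h
  have ha : a ≠ 0 := by rintro rfl; simp at hab
  have h2 : 0 ≤ (c * a) * (a * b) := mul_nonneg hca hab.le
  have h3 : (c * a) * (a * b) = (c * b) * (a * a) := by ring
  have h4 : 0 < a * a := mul_self_pos.mpr ha
  have h5 : (c * b) * (a * a) < 0 := mul_neg_of_neg_of_pos h h4
  linarith

/-- strictly opposite sides force zero -/
lemma zero_of_opp {a b c : ℝ} (hab : a * b < 0) (hca : 0 ≤ c * a) (hcb : 0 ≤ c * b) : c = 0 := by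
  by_contra h
  have h2 : 0 ≤ (c * a) * (c * b) := mul_nonneg hca hcb
  have h3 : (c * a) * (c * b) = (c * c) * (a * b) := by ring
  have h4 : 0 < c * c := mul_self_pos.mpr h
  have h5 : (c * c) * (a * b) < 0 := mul_neg_of_pos_of_neg h4 hab
  linarith

/-- opposite transfer: a,b opposite sides, c weakly on a's side → c weakly off b's side -/
lemma sign_transfer_neg {a b c : ℝ} (hab : a * b < 0) (hca : 0 ≤ c * a) : c * b ≤ 0 := by
  by_contra h
  push_neg at h
  have hc : c ≠ 0 := by rintro rfl; simp at h
  have h2 : 0 ≤ (c * a) * (c * b) := mul_nonneg hca h.le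
  have h3 : (c * a) * (c * b) = (c * c) * (a * b) := by ring
  have h4 : 0 < c * c := mul_self_pos.mpr hc
  have h5 : (c * c) * (a * b) < 0 := mul_neg_of_pos_of_neg h4 hab
  linarith


def Hset (L : Finset Line2) (x : ℝ × ℝ) : Set (ℝ × ℝ) :=
  {z | ∀ ℓ ∈ L, 0 < lf ℓ z * lf ℓ x}

def Kset (L : Finset Line2) (x : ℝ × ℝ) : Set (ℝ × ℝ) :=
  {z | ∀ ℓ ∈ L, 0 ≤ lf ℓ z * lf ℓ x}

lemma mem_linesUnion {L : Finset Line2} {z : ℝ × ℝ} :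
    z ∈ linesUnion L ↔ ∃ ℓ ∈ L, lf ℓ z = 0 := by
  simp [linesUnion, lf_carrier]

lemma Hset_open (L : Finset Line2) (x : ℝ × ℝ) : IsOpen (Hset L x) := by
  have : Hset L x = ⋂ ℓ ∈ L, {z | 0 < lf ℓ z * lf ℓ x} := by
    ext z; simp [Hset]
  rw [this]
  exact isOpen_biInter_finset fun ℓ _ =>
    isOpen_lt continuous_const ((lf_cont ℓ).mul continuous_const)

lemma Kset_closed (L : Finset Line2) (x : ℝ × ℝ) : IsClosed (Kset L x) := by
  have : Kset L x = ⋂ ℓ ∈ L, {z | 0 ≤ lf ℓ z * lf ℓ x} := by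
    ext z; simp [Kset]
  rw [this]
  apply isClosed_biInter
  intro ℓ _
  exact isClosed_le continuous_const ((lf_cont ℓ).mul continuous_const)

lemma Hset_convex (L : Finset Line2) (x : ℝ × ℝ) : Convex ℝ (Hset L x) := by
  intro z₁ hz₁ z₂ hz₂ a b ha hb hab
  intro ℓ hℓ
  have h1 := hz₁ ℓ hℓ
  have h2 := hz₂ ℓ hℓ
  have := lf_combo (ℓ := ℓ) hab z₁ z₂
  rw [this]
  rcases eq_or_lt_of_le ha with h | h
  · have : b = 1 := by linarith
    simp [← h, this]; exact h2
  · rcases eq_or_lt_of_le hb with h' | h'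
    · have : a = 1 := by linarith
      simp [← h', this]; exact h1
    · have : (a * lf ℓ z₁ + b * lf ℓ z₂) * lf ℓ x
          = a * (lf ℓ z₁ * lf ℓ x) + b * (lf ℓ z₂ * lf ℓ x) := by ring
      rw [this]
      positivity

lemma cell_spec {L : Finset Line2} {C : Set (ℝ × ℝ)} (hC : IsCell L C) :
    ∃ x : ℝ × ℝ, (∀ ℓ ∈ L, lf ℓ x ≠ 0) ∧ C = Hset L x ∧ closure C = Kset L x := by
  obtain ⟨x, hx, hCeq⟩ := hC
  have hx' : ∀ ℓ ∈ L, lf ℓ x ≠ 0 := by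
    intro ℓ hℓ h0
    exact hx (mem_linesUnion.mpr ⟨ℓ, hℓ, h0⟩)
  have hxH : x ∈ Hset L x := by
    intro ℓ hℓ
    exact mul_self_pos.mpr (hx' ℓ hℓ)
  have hHsub : Hset L x ⊆ (linesUnion L)ᶜ := by
    intro z hz
    rw [mem_compl_iff, mem_linesUnion]
    rintro ⟨ℓ, hℓ, h0⟩
    have := hz ℓ hℓ
    rw [h0] at this; simp at this
  have hCH : C = Hset L x := by
    rw [hCeq]
    apply Subset.antisymm
    · -- component ⊆ H
      intro z hz
      intro ℓ hℓ
      by_contra hcon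
      push_neg at hcon
      have hzU : z ∈ (linesUnion L)ᶜ := connectedComponentIn_subset _ _ hz
      have hz0 : lf ℓ z ≠ 0 := by
        intro h0
        exact hzU (mem_linesUnion.mpr ⟨ℓ, hℓ, h0⟩)
      have hprec : IsPreconnected (connectedComponentIn (linesUnion L)ᶜ x) :=
        isPreconnected_connectedComponentIn
      have hxmem : x ∈ connectedComponentIn (linesUnion L)ᶜ x :=
        mem_connectedComponentIn hx
      have hmul_ne : lf ℓ z * lf ℓ x ≠ 0 := mul_ne_zero hz0 (hx' ℓ hℓ)
      have hneg : lf ℓ z * lf ℓ x < 0 := lt_of_le_of_ne hcon hmul_ne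
      -- opposite signs; get a zero in the component
      have : ∃ w ∈ connectedComponentIn (linesUnion L)ᶜ x, lf ℓ w = 0 := by
        rcases lt_or_gt_of_ne hz0 with hzneg | hzpos
        · have hxpos : 0 < lf ℓ x := by nlinarith
          obtain ⟨w, hw, hw0⟩ := hprec.intermediate_value₂ hz hxmem
            ((lf_cont ℓ).continuousOn) (continuousOn_const (c := (0:ℝ)))
            (le_of_lt hzneg) (le_of_lt hxpos)
          exact ⟨w, hw, hw0⟩
        · have hxneg : lf ℓ x < 0 := by nlinarith
          obtain ⟨w, hw, hw0⟩ := hprec.intermediate_value₂ hxmem hz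
            ((lf_cont ℓ).continuousOn) (continuousOn_const (c := (0:ℝ)))
            (le_of_lt hxneg) (le_of_lt hzpos)
          exact ⟨w, hw, hw0⟩
      obtain ⟨w, hw, hw0⟩ := this
      have hwU : w ∈ (linesUnion L)ᶜ := connectedComponentIn_subset _ _ hw
      exact hwU (mem_linesUnion.mpr ⟨ℓ, hℓ, hw0⟩)
    · exact (Hset_convex L x).isPreconnected.subset_connectedComponentIn hxH hHsub
  refine ⟨x, hx', hCH, ?_⟩
  rw [hCH]
  apply Subset.antisymm
  · apply closure_minimal _ (Kset_closed L x)
    intro z hz ℓ hℓ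
    exact (hz ℓ hℓ).le
  · intro z hz
    have key : Filter.Tendsto
        (fun n : ℕ => (1/(n+1) : ℝ) • x + (1 - 1/(n+1) : ℝ) • z) Filter.atTop (nhds z) := by
      have h1 : Filter.Tendsto (fun n : ℕ => (1/(n+1) : ℝ)) Filter.atTop (nhds 0) :=
        tendsto_one_div_add_atTop_nhds_zero_nat
      have h2 : Filter.Tendsto (fun n : ℕ => (1/(n+1) : ℝ) • x) Filter.atTop (nhds ((0:ℝ) • x)) :=
        h1.smul_const x
      have h3 : Filter.Tendsto (fun n : ℕ => (1 - 1/(n+1) : ℝ)) Filter.atTop (nhds 1) := by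
        have := (tendsto_const_nhds (x := (1:ℝ)) (f := Filter.atTop (α := ℕ))).sub h1
        simpa using this
      have h4 : Filter.Tendsto (fun n : ℕ => (1 - 1/(n+1) : ℝ) • z) Filter.atTop (nhds ((1:ℝ) • z)) :=
        h3.smul_const z
      have := h2.add h4
      simpa using this
    apply mem_closure_of_tendsto key
    apply Filter.Eventually.of_forall
    intro n ℓ hℓ
    have hpos : (0:ℝ) < 1/(n+1) := by positivity
    have hle : (1/(n+1) : ℝ) ≤ 1 := by
      rw [div_le_one (by positivity)]
      linarith [Nat.cast_nonneg (α := ℝ) n]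
    have := lf_combo (ℓ := ℓ) (a := (1/(n+1) : ℝ)) (b := (1 - 1/(n+1) : ℝ)) (by ring) x z
    rw [this]
    have expand : (1/(n+1) * lf ℓ x + (1 - 1/(n+1)) * lf ℓ z) * lf ℓ x
        = 1/(n+1) * (lf ℓ x * lf ℓ x) + (1 - 1/(n+1)) * (lf ℓ z * lf ℓ x) := by ring
    rw [expand]
    have t1 : 0 < 1/(n+1) * (lf ℓ x * lf ℓ x) :=
      mul_pos hpos (mul_self_pos.mpr (hx' ℓ hℓ))
    have t2 : 0 ≤ (1 - 1/(n+1)) * (lf ℓ z * lf ℓ x) :=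
      mul_nonneg (by linarith) (hz ℓ hℓ)
    linarith

lemma interior_Kset {L : Finset Line2} {x : ℝ × ℝ} (hx : ∀ ℓ ∈ L, lf ℓ x ≠ 0) :
    interior (Kset L x) = Hset L x := by
  apply Subset.antisymm
  · intro z hz
    have hzK : z ∈ Kset L x := interior_subset hz
    intro ℓ hℓ
    rcases lt_or_eq_of_le (hzK ℓ hℓ) with h | h
    · exact h
    · exfalso
      have hz0 : lf ℓ z = 0 := by
        rcases mul_eq_zero.mp h.symm with h' | h'
        · exact h'
        · exact absurd h' (hx ℓ hℓ)
      obtain ⟨ε, hε, hball⟩ := Metric.isOpen_iff.mp isOpen_interior z hz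
      have hs0 : lf ℓ x ≠ 0 := hx ℓ hℓ
      have hM0 : 0 < |ℓ.a| + |ℓ.b| := by
        rcases nondeg' ℓ with h' | h'
        · have := abs_pos.mpr h'; have := abs_nonneg ℓ.b; linarith
        · have := abs_pos.mpr h'; have := abs_nonneg ℓ.a; linarith
      obtain ⟨M, hM⟩ : ∃ M : ℝ, M = |ℓ.a| + |ℓ.b| := ⟨_, rfl⟩
      rw [← hM] at hM0
      obtain ⟨t, ht⟩ : ∃ t : ℝ, t = ε / (2 * M) := ⟨_, rfl⟩
      have ht0 : 0 < t := by rw [ht]; positivity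
      obtain ⟨c, hc⟩ : ∃ c : ℝ, c = if 0 < lf ℓ x then -t else t := ⟨_, rfl⟩
      have habs : |c| = t := by
        rw [hc]; split_ifs <;> simp [abs_of_pos ht0, abs_of_neg, ht0, neg_neg]
      have hcs : c * lf ℓ x < 0 := by
        rw [hc]; split_ifs with hpos
        · have : 0 < t * lf ℓ x := mul_pos ht0 hpos
          linarith
        · have hneg : lf ℓ x < 0 := lt_of_le_of_ne (not_lt.mp hpos) hs0
          exact mul_neg_of_pos_of_neg ht0 hneg
      obtain ⟨z', hz'⟩ : ∃ z' : ℝ × ℝ, z' = z + c • (ℓ.a, ℓ.b) := ⟨_, rfl⟩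
      have hdist : dist z' z < ε := by
        rw [hz', Prod.dist_eq]
        have e1 : dist (z + c • ((ℓ.a : ℝ), ℓ.b)).1 z.1 = |c| * |ℓ.a| := by
          simp only [Prod.fst_add, smul_fst, Real.dist_eq]
          rw [show z.1 + c * ℓ.a - z.1 = c * ℓ.a by ring, abs_mul]
        have e2 : dist (z + c • ((ℓ.a : ℝ), ℓ.b)).2 z.2 = |c| * |ℓ.b| := by
          simp only [Prod.snd_add, smul_snd, Real.dist_eq]
          rw [show z.2 + c * ℓ.b - z.2 = c * ℓ.b by ring, abs_mul]
        rw [e1, e2, habs]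
        have hta : t * |ℓ.a| ≤ t * M := by
          apply mul_le_mul_of_nonneg_left _ ht0.le
          rw [hM]; linarith [abs_nonneg ℓ.b]
        have htb : t * |ℓ.b| ≤ t * M := by
          apply mul_le_mul_of_nonneg_left _ ht0.le
          rw [hM]; linarith [abs_nonneg ℓ.a]
        have htM : t * M = ε / 2 := by
          rw [ht]; field_simp
        rw [sup_lt_iff]
        constructor <;> linarith
      have hz'K : z' ∈ Kset L x := interior_subset (hball hdist)
      have hle := hz'K ℓ hℓ
      have hlfz' : lf ℓ z' = c * (ℓ.a^2 + ℓ.b^2) := by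
        rw [hz']
        simp only [lf, Prod.fst_add, Prod.snd_add, smul_fst, smul_snd]
        simp only [lf] at hz0
        nlinarith [hz0]
      rw [hlfz'] at hle
      have hN : 0 < ℓ.a^2 + ℓ.b^2 := by
        rcases nondeg' ℓ with h' | h' <;> positivity
      nlinarith [hle, hN, hcs]
  · exact interior_maximal (fun z hz ℓ hℓ => (hz ℓ hℓ).le) (Hset_open L x)

lemma frontier_Kset {L : Finset Line2} {x : ℝ × ℝ} (hx : ∀ ℓ ∈ L, lf ℓ x ≠ 0) :
    frontier (Kset L x) = Kset L x \ Hset L x := by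
  rw [frontier, (Kset_closed L x).closure_eq, interior_Kset hx]


/-- pigeonhole: a nondegenerate segment covered by the lines of L lies on one line -/
lemma seg_sub_line {L : Finset Line2} {A B : ℝ × ℝ} (hAB : A ≠ B)
    (h : ∀ z ∈ segment ℝ A B, ∃ ℓ ∈ L, lf ℓ z = 0) :
    ∃ ℓ ∈ L, lf ℓ A = 0 ∧ lf ℓ B = 0 := by
  -- sample points
  set n := L.card with hn
  have hmem : ∀ i : Fin (n + 1), ((1 : ℝ) - (i : ℝ)/(n+1)) • A + ((i : ℝ)/(n+1)) • B ∈ segment ℝ A B := by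
    intro i
    refine ⟨1 - (i:ℝ)/(n+1), (i:ℝ)/(n+1), ?_, ?_, by ring, rfl⟩
    · have hi : (i : ℝ) ≤ n := by
        have := Fin.is_le i
        exact_mod_cast this
      have : (i:ℝ)/(n+1) ≤ 1 := by
        rw [div_le_one (by positivity)]
        linarith
      linarith
    · positivity
  have hch : ∀ i : Fin (n+1), ∃ ℓ ∈ L, lf ℓ (((1:ℝ) - (i:ℝ)/(n+1)) • A + ((i:ℝ)/(n+1)) • B) = 0 :=
    fun i => h _ (hmem i)
  choose F hF1 hF2 using hch
  have hcard : L.card < (Finset.univ : Finset (Fin (n+1))).card := by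
    simp [hn]
  obtain ⟨i, _, j, _, hij, hFij⟩ :=
    Finset.exists_ne_map_eq_of_card_lt_of_maps_to hcard (fun i _ => hF1 i)
  set ℓ := F i with hℓ
  refine ⟨ℓ, hF1 i, ?_⟩
  have ei := hF2 i
  have ej := hF2 j
  rw [← hFij] at ej
  rw [lf_combo (by ring)] at ei ej
  have hne : (i:ℝ)/(n+1) ≠ (j:ℝ)/(n+1) := by
    intro hcon
    apply hij
    have : (i:ℝ) = (j:ℝ) := by
      field_simp at hcon
      exact_mod_cast hcon
    exact Fin.ext (by exact_mod_cast this)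
  have hd : (i:ℝ)/(n+1) - (j:ℝ)/(n+1) ≠ 0 := sub_ne_zero.mpr hne
  have h1 : ((i:ℝ)/(n+1) - (j:ℝ)/(n+1)) * (lf ℓ B - lf ℓ A) = 0 := by
    linear_combination ei - ej
  have h2 : lf ℓ B - lf ℓ A = 0 := (mul_eq_zero.mp h1).resolve_left hd
  have hA : lf ℓ A = 0 := by
    have hb : lf ℓ B = lf ℓ A := by linarith
    rw [hb] at ei
    linarith
  exact ⟨hA, by linarith⟩

/-- extract convex coordinates for a point of a triangle hull -/
lemma hull3_coords {A B C z : ℝ × ℝ}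
    (hz : z ∈ convexHull ℝ ({A, B, C} : Set (ℝ × ℝ))) :
    ∃ c₁ c₂ c₃ : ℝ, 0 ≤ c₁ ∧ 0 ≤ c₂ ∧ 0 ≤ c₃ ∧ c₁ + c₂ + c₃ = 1 ∧
      c₁ • A + c₂ • B + c₃ • C = z := by
  rw [show ({A, B, C} : Set (ℝ × ℝ)) = insert A {B, C} from rfl,
    convexHull_insert ⟨B, by simp⟩, convexHull_pair] at hz
  rw [mem_convexJoin] at hz
  obtain ⟨A', hA', z', hz', hseg⟩ := hz
  rw [mem_singleton_iff] at hA'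
  subst hA'
  obtain ⟨b, c, hb, hc, hbc, hzeq⟩ := hz'
  obtain ⟨s, t, hs, ht, hst, hzeq2⟩ := hseg
  refine ⟨s, t * b, t * c, hs, mul_nonneg ht hb, mul_nonneg ht hc, by nlinarith, ?_⟩
  rw [← hzeq2, ← hzeq]
  rw [smul_add, smul_smul, smul_smul]
  abel

/-- uniqueness of affine coordinates w.r.t. an affinely independent triple -/
lemma coords_unique {A B C : ℝ × ℝ} (hdet : det3 A B C ≠ 0)
    {a₁ a₂ a₃ b₁ b₂ b₃ : ℝ} (ha : a₁ + a₂ + a₃ = 1) (hb : b₁ + b₂ + b₃ = 1)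
    (heq : a₁ • A + a₂ • B + a₃ • C = b₁ • A + b₂ • B + b₃ • C) :
    a₁ = b₁ ∧ a₂ = b₂ ∧ a₃ = b₃ := by
  have h1 : a₁ * A.1 + a₂ * B.1 + a₃ * C.1 = b₁ * A.1 + b₂ * B.1 + b₃ * C.1 := by
    have := congrArg Prod.fst heq
    simpa [Prod.fst_add, smul_fst] using this
  have h2 : a₁ * A.2 + a₂ * B.2 + a₃ * C.2 = b₁ * A.2 + b₂ * B.2 + b₃ * C.2 := by
    have := congrArg Prod.snd heq
    simpa [Prod.snd_add, smul_snd] using this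
  -- c := a - b sums to 0 and combination vanishes
  have e1 : (a₂ - b₂) * (B.1 - A.1) + (a₃ - b₃) * (C.1 - A.1) = 0 := by
    linear_combination h1 - A.1 * ha + A.1 * hb
  have e2 : (a₂ - b₂) * (B.2 - A.2) + (a₃ - b₃) * (C.2 - A.2) = 0 := by
    linear_combination h2 - A.2 * ha + A.2 * hb
  have k2 : (a₂ - b₂) * det3 A B C = 0 := by
    unfold det3
    linear_combination (C.2 - A.2) * e1 - (C.1 - A.1) * e2
  have k3 : (a₃ - b₃) * det3 A B C = 0 := by
    unfold det3
    linear_combination (B.1 - A.1) * e2 - (B.2 - A.2) * e1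
  have h23 : a₂ = b₂ := by
    have := (mul_eq_zero.mp k2).resolve_right hdet
    linarith
  have h33 : a₃ = b₃ := by
    have := (mul_eq_zero.mp k3).resolve_right hdet
    linarith
  exact ⟨by linarith, h23, h33⟩

/-- a point of the edge `[B,C]` is not in an open subset of the triangle -/
lemma edge_not_mem_open {A B C : ℝ × ℝ} (hdet : det3 A B C ≠ 0)
    {H : Set (ℝ × ℝ)} (hHo : IsOpen H)
    (hHs : H ⊆ convexHull ℝ ({A, B, C} : Set (ℝ × ℝ)))
    {z : ℝ × ℝ} (hz : z ∈ segment ℝ B C) : z ∉ H := by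
  intro hzH
  obtain ⟨b, c, hb, hc, hbc, hzeq⟩ := hz
  have hzA : z ≠ A := by
    intro hcon
    subst hcon
    have heq : (1:ℝ) • z + (0:ℝ) • B + (0:ℝ) • C = (0:ℝ) • z + b • B + c • C := by
      simp only [one_smul, zero_smul, add_zero, zero_add]
      exact hzeq.symm
    have := coords_unique hdet (by norm_num) (by linarith) heq
    linarith [this.1]
  obtain ⟨ε, hε, hball⟩ := Metric.isOpen_iff.mp hHo z hzH
  have hdistpos : 0 < dist z A := dist_pos.mpr hzA
  obtain ⟨δ, hδ⟩ : ∃ δ : ℝ, δ = ε / (2 * dist z A) := ⟨_, rfl⟩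
  have hδ0 : 0 < δ := by rw [hδ]; positivity
  obtain ⟨z', hz'⟩ : ∃ z' : ℝ × ℝ, z' = z + δ • (z - A) := ⟨_, rfl⟩
  have hzd : dist z' z < ε := by
    rw [hz']
    have : z + δ • (z - A) - z = δ • (z - A) := by abel
    rw [dist_eq_norm, this, norm_smul]
    rw [Real.norm_eq_abs, abs_of_pos hδ0]
    have : ‖z - A‖ = dist z A := by rw [dist_eq_norm]
    rw [this, hδ]
    rw [div_mul_eq_mul_div, div_lt_iff₀ (by positivity)]
    nlinarith [hdistpos, hε]
  have hz'H : z' ∈ convexHull ℝ ({A, B, C} : Set (ℝ × ℝ)) := hHs (hball hzd)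
  obtain ⟨c₁, c₂, c₃, hc₁, _, _, hsum, hcomb⟩ := hull3_coords hz'H
  -- alternative representation of z'
  have halt : (-δ) • A + ((1 + δ) * b) • B + ((1 + δ) * c) • C = z' := by
    rw [hz', ← hzeq]
    module
  have := coords_unique hdet hsum (by linear_combination (1 + δ) * hbc) (hcomb.trans halt.symm)
  have : c₁ = -δ := this.1
  linarith

lemma exists_zero_line {L : Finset Line2} {y z : ℝ × ℝ}
    (hy : ∀ ℓ ∈ L, lf ℓ y ≠ 0)
    (hzK : z ∈ Kset L y) (hzH : z ∉ Hset L y) : ∃ ℓ ∈ L, lf ℓ z = 0 := by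
  by_contra hc
  push_neg at hc
  apply hzH
  intro ℓ hℓ
  exact lt_of_le_of_ne (hzK ℓ hℓ)
    (Ne.symm (mul_ne_zero (hc ℓ hℓ) (hy ℓ hℓ)))

lemma zeros_on_segment {m : Line2} {A B x' y' : ℝ × ℝ}
    (hA : A ∈ segment ℝ x' y') (hB : B ∈ segment ℝ x' y') (hAB : A ≠ B)
    (hA0 : lf m A = 0) (hB0 : lf m B = 0) : lf m x' = 0 ∧ lf m y' = 0 := by
  obtain ⟨a₁, b₁, ha₁, hb₁, hs₁, hc₁⟩ := hA
  obtain ⟨a₂, b₂, ha₂, hb₂, hs₂, hc₂⟩ := hB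
  have e₁ : a₁ * lf m x' + b₁ * lf m y' = 0 := by
    rw [← lf_combo hs₁, hc₁]; exact hA0
  have e₂ : a₂ * lf m x' + b₂ * lf m y' = 0 := by
    rw [← lf_combo hs₂, hc₂]; exact hB0
  by_cases hae : a₁ = a₂
  · exfalso
    have hbe : b₁ = b₂ := by linarith
    apply hAB
    rw [← hc₁, ← hc₂, hae, hbe]
  · have hd : a₁ - a₂ ≠ 0 := sub_ne_zero.mpr hae
    have key : (a₁ - a₂) * (lf m x' - lf m y') = 0 := by
      linear_combination e₁ - e₂ - (hs₁ - hs₂) * lf m y'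
    have heq2 : lf m x' = lf m y' := by
      have := (mul_eq_zero.mp key).resolve_left hd
      linarith
    have : lf m x' = 0 := by
      rw [heq2] at e₁
      have : (a₁ + b₁) * lf m y' = 0 := by linarith [e₁]
      rw [hs₁, one_mul] at this
      rw [heq2]; exact this
    exact ⟨this, by rw [← heq2]; exact this⟩

lemma kill_case {L : Finset Line2} {x y : ℝ × ℝ}
    (hx : ∀ ℓ ∈ L, lf ℓ x ≠ 0)
    {P : Set (ℝ × ℝ)} (hPK : closure P = Kset L x)
    {m g h : Line2} (hm : m ∈ L) (hgL : g ∈ L) (hhL : h ∈ L)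
    {A B : ℝ × ℝ} (hAB : A ≠ B)
    (hmA : lf m A = 0) (hmB : lf m B = 0)
    (hgB : lf g B = 0) (hgA : 0 < lf g A * lf g y)
    (hhA : lf h A = 0) (hhB : 0 < lf h B * lf h y)
    (hsg : lf g x * lf g y < 0) (hsh : lf h x * lf h y < 0)
    (hedge : ∃ e, IsEdge (closure P) e ∧ e ⊆ m.carrier) : False := by
  obtain ⟨e, heP, hem⟩ := hedge
  obtain ⟨a, b, hab, he, hefr, hemax⟩ := heP
  have haE : a ∈ e := by rw [he]; exact left_mem_segment ℝ a b
  have haK : a ∈ Kset L x := by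
    have h1 : a ∈ closure (closure P) := frontier_subset_closure (hefr haE)
    rwa [closure_closure, hPK] at h1
  have ha0 : lf m a = 0 := lf_carrier.mp (hem haE)
  obtain ⟨t, hteq⟩ := line_param hAB hmA hmB ha0
  have hga : lf g a = (1 - t) * lf g A := by rw [hteq, lf_param, hgB]; ring
  have hha : lf h a = t * lf h B := by rw [hteq, lf_param, hhA]; ring
  have h1 : lf g a * lf g y ≤ 0 := sign_transfer_neg hsg (haK g hgL)
  have h2 : lf h a * lf h y ≤ 0 := sign_transfer_neg hsh (haK h hhL)
  rw [hga] at h1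
  rw [hha] at h2
  have ht1 : 1 - t ≤ 0 := by nlinarith [hgA, h1]
  have ht0 : t ≤ 0 := by nlinarith [hhB, h2]
  linarith

lemma main_case {L : Finset Line2} (hL : IsSimpleArrangement L) {x y : ℝ × ℝ}
    (hx : ∀ ℓ ∈ L, lf ℓ x ≠ 0) (hy : ∀ ℓ ∈ L, lf ℓ y ≠ 0)
    {P T : Set (ℝ × ℝ)}
    (hPK : closure P = Kset L x)
    (hTK : closure T = Kset L y)
    {A B C : ℝ × ℝ}
    (hconv : closure T = convexHull ℝ ({A, B, C} : Set (ℝ × ℝ)))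
    {m g h : Line2} (hm : m ∈ L) (hgL : g ∈ L) (hhL : h ∈ L)
    (hmA : lf m A = 0) (hmB : lf m B = 0)
    (hgB : lf g B = 0) (hhA : lf h A = 0)
    (hAB : A ≠ B)
    (hgA : lf g A ≠ 0) (hhB : lf h B ≠ 0)
    (hsg : 0 < lf g x * lf g y) (hsh : 0 < lf h x * lf h y)
    (hedge : ∃ e, IsEdge (closure P) e ∧ e ⊆ m.carrier) :
    ∃ e, IsEdge (closure T) e ∧ IsEdge (closure P) e := by
  have hCK : convexHull ℝ ({A, B, C} : Set (ℝ × ℝ)) = Kset L y := hconv.symm.trans hTK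
  have hAmem : A ∈ Kset L y := by
    rw [← hCK]; exact subset_convexHull ℝ _ (by simp)
  have hBmem : B ∈ Kset L y := by
    rw [← hCK]; exact subset_convexHull ℝ _ (by simp)
  have hgAy : 0 < lf g A * lf g y :=
    lt_of_le_of_ne (hAmem g hgL) (Ne.symm (mul_ne_zero hgA (hy g hgL)))
  have hhBy : 0 < lf h B * lf h y :=
    lt_of_le_of_ne (hBmem h hhL) (Ne.symm (mul_ne_zero hhB (hy h hhL)))
  have hsegT : segment ℝ A B ⊆ Kset L y := by
    rw [← hCK]
    exact (convex_convexHull ℝ _).segment_subset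
      (subset_convexHull ℝ _ (by simp)) (subset_convexHull ℝ _ (by simp))
  have hm0 : ∀ z ∈ segment ℝ A B, lf m z = 0 := by
    rintro z ⟨a', b', _, _, hs, hcomb⟩
    rw [← hcomb, lf_combo hs, hmA, hmB]
    ring
  obtain ⟨e, heP, hem⟩ := hedge
  obtain ⟨a, b, hab, he, hefr, hemax⟩ := heP
  have hfr : frontier (closure P) = Kset L x \ Hset L x := by
    rw [hPK, frontier_Kset hx]
  have eK : ∀ z ∈ e, z ∈ Kset L x := fun z hz => (hfr ▸ hefr hz).1
  -- step α : e ⊆ segment A B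
  have eAB : e ⊆ segment ℝ A B := by
    intro z hz
    have hz0 : lf m z = 0 := lf_carrier.mp (hem hz)
    obtain ⟨t, hteq⟩ := line_param hAB hmA hmB hz0
    have hzK := eK z hz
    have hga : lf g z = (1 - t) * lf g A := by rw [hteq, lf_param, hgB]; ring
    have hha : lf h z = t * lf h B := by rw [hteq, lf_param, hhA]; ring
    have h1 : 0 ≤ lf g z * lf g y := sign_transfer hsg (hzK g hgL)
    have h2 : 0 ≤ lf h z * lf h y := sign_transfer hsh (hzK h hhL)
    rw [hga] at h1
    rw [hha] at h2
    have ht1 : t ≤ 1 := by nlinarith [hgAy, h1]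
    have ht0 : 0 ≤ t := by nlinarith [hhBy, h2]
    exact ⟨1 - t, t, by linarith, ht0, by ring, by rw [hteq]; module⟩
  -- step β : no separating line other than m
  have hnosep : ∀ ℓ ∈ L, ℓ ≠ m → 0 < lf ℓ x * lf ℓ y := by
    intro ℓ hℓ hne
    rcases lt_or_gt_of_ne (mul_ne_zero (hx ℓ hℓ) (hy ℓ hℓ)) with hneg | hpos
    swap
    · exact hpos
    exfalso
    have haE : a ∈ e := by rw [he]; exact left_mem_segment ℝ a b
    have hbE : b ∈ e := by rw [he]; exact right_mem_segment ℝ a b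
    have h0a : lf ℓ a = 0 :=
      zero_of_opp hneg (eK a haE ℓ hℓ) (hsegT (eAB haE) ℓ hℓ)
    have h0b : lf ℓ b = 0 :=
      zero_of_opp hneg (eK b hbE ℓ hℓ) (hsegT (eAB hbE) ℓ hℓ)
    have hma : lf m a = 0 := lf_carrier.mp (hem haE)
    have hmb : lf m b = 0 := lf_carrier.mp (hem hbE)
    exact hL.1 ℓ hℓ m hm hne (parallel_of_two hab h0a h0b hma hmb)
  -- step γδ : segment A B is in the frontier of both closures
  have hABKx : segment ℝ A B ⊆ Kset L x \ Hset L x := by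
    intro z hz
    constructor
    · intro ℓ hℓ
      by_cases hcase : ℓ = m
      · subst hcase
        rw [hm0 z hz]
        simp
      · exact sign_transfer (mul_comm (lf ℓ x) (lf ℓ y) ▸ hnosep ℓ hℓ hcase)
          (hsegT hz ℓ hℓ)
    · intro hcon
      have := hcon m hm
      rw [hm0 z hz] at this
      simp at this
  have hABKy : segment ℝ A B ⊆ Kset L y \ Hset L y := by
    intro z hz
    refine ⟨hsegT hz, ?_⟩
    intro hcon
    have := hcon m hm
    rw [hm0 z hz] at this
    simp at this
  -- the edge of T
  have edgeT : IsEdge (closure T) (segment ℝ A B) := by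
    refine ⟨A, B, hAB, rfl, ?_, ?_⟩
    · rw [hTK, frontier_Kset hy]
      exact hABKy
    · intro x' y' hsub hfr'
      rw [hTK, frontier_Kset hy] at hfr'
      have hA' : A ∈ segment ℝ x' y' := hsub (left_mem_segment ℝ A B)
      have hB' : B ∈ segment ℝ x' y' := hsub (right_mem_segment ℝ A B)
      obtain ⟨hx'0, hy'0⟩ := zeros_on_segment hA' hB' hAB hmA hmB
      have hmemseg : ∀ z' : ℝ × ℝ, z' ∈ segment ℝ x' y' → lf m z' = 0 →
          z' ∈ segment ℝ A B := by
        intro z' hz' hz'0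
        obtain ⟨t, hteq⟩ := line_param hAB hmA hmB hz'0
        have hz'K : z' ∈ Kset L y := (hfr' hz').1
        have hga : lf g z' = (1 - t) * lf g A := by rw [hteq, lf_param, hgB]; ring
        have hha : lf h z' = t * lf h B := by rw [hteq, lf_param, hhA]; ring
        have h1 : 0 ≤ lf g z' * lf g y := hz'K g hgL
        have h2 : 0 ≤ lf h z' * lf h y := hz'K h hhL
        rw [hga] at h1
        rw [hha] at h2
        have ht1 : t ≤ 1 := by nlinarith [hgAy, h1]
        have ht0 : 0 ≤ t := by nlinarith [hhBy, h2]
        exact ⟨1 - t, t, by linarith, ht0, by ring, by rw [hteq]; module⟩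
      have hx'm : x' ∈ segment ℝ A B :=
        hmemseg x' (left_mem_segment ℝ x' y') hx'0
      have hy'm : y' ∈ segment ℝ A B :=
        hmemseg y' (right_mem_segment ℝ x' y') hy'0
      exact Subset.antisymm ((convex_segment A B).segment_subset hx'm hy'm) hsub
  -- the edge of P
  have heq : segment ℝ A B = e := by
    apply hemax A B (he ▸ eAB)
    rw [hfr]
    exact hABKx
  exact ⟨segment ℝ A B, edgeT, by rw [heq]; exact ⟨a, b, hab, he, hefr, hemax⟩⟩

end Stmt18Aux

open Stmt18Aux

/-- Let `L` be a simple arrangement of lines, `P` a bounded convex cell of `L`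
with at least 5 edges such that every line of `L` contains an edge of `P`, and
let `T` be any triangular bounded cell of `L`.  Then `T` and `P` share a common
edge. -/
theorem stmt18 (L : Finset Line2) (hL : IsSimpleArrangement L)
    (P T : Set (ℝ × ℝ))
    (hP : IsCell L P) (hPconv : Convex ℝ P) (hPb : Bornology.IsBounded P)
    (hP5 : 5 ≤ {e : Set (ℝ × ℝ) | IsEdge (closure P) e}.ncard)
    (hall : ∀ ℓ ∈ L, ∃ e : Set (ℝ × ℝ), IsEdge (closure P) e ∧ e ⊆ ℓ.carrier)
    (hT : IsCell L T) (hTb : Bornology.IsBounded T)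
    (hTtri : IsTriangleSet (closure T)) :
    ∃ e : Set (ℝ × ℝ), IsEdge (closure T) e ∧ IsEdge (closure P) e := by
  obtain ⟨x, hx, hPH, hPK⟩ := cell_spec hP
  obtain ⟨y, hy, hTH, hTK⟩ := cell_spec hT
  obtain ⟨u, v, w, hncol, hconv⟩ := hTtri
  have hdet : det3 u v w ≠ 0 := fun h0 => hncol (collinear_of_det3 h0)
  have huv : u ≠ v := by rintro rfl; apply hdet; unfold det3; ring
  have huw : u ≠ w := by rintro rfl; apply hdet; unfold det3; ring
  have hvw : v ≠ w := by rintro rfl; apply hdet; unfold det3; ring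
  have hCK : convexHull ℝ ({u, v, w} : Set (ℝ × ℝ)) = Kset L y := hconv.symm.trans hTK
  have hHsub : Hset L y ⊆ convexHull ℝ ({u, v, w} : Set (ℝ × ℝ)) := by
    rw [hCK]
    exact fun z hz ℓ hℓ => (hz ℓ hℓ).le
  have hsegsub : ∀ z₁ z₂ : ℝ × ℝ, z₁ ∈ ({u,v,w} : Set (ℝ × ℝ)) → z₂ ∈ ({u,v,w} : Set (ℝ × ℝ)) →
      segment ℝ z₁ z₂ ⊆ Kset L y := by
    intro z₁ z₂ h₁ h₂
    rw [← hCK]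
    exact (convex_convexHull ℝ _).segment_subset
      (subset_convexHull ℝ _ h₁) (subset_convexHull ℝ _ h₂)
  -- permuted hull representations
  have hset1 : ({v, u, w} : Set (ℝ × ℝ)) = {u, v, w} := by
    ext z; simp only [Set.mem_insert_iff, Set.mem_singleton_iff]; tauto
  have hset2 : ({w, u, v} : Set (ℝ × ℝ)) = {u, v, w} := by
    ext z; simp only [Set.mem_insert_iff, Set.mem_singleton_iff]; tauto
  have hset3 : ({u, w, v} : Set (ℝ × ℝ)) = {u, v, w} := by
    ext z; simp only [Set.mem_insert_iff, Set.mem_singleton_iff]; tauto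
  have hset4 : ({v, w, u} : Set (ℝ × ℝ)) = {u, v, w} := by
    ext z; simp only [Set.mem_insert_iff, Set.mem_singleton_iff]; tauto
  -- find the lines containing the edges
  have findline : ∀ A' B' C' : ℝ × ℝ, det3 A' B' C' ≠ 0 →
      ({A', B', C'} : Set (ℝ × ℝ)) = {u, v, w} →
      B' ∈ ({u,v,w} : Set (ℝ × ℝ)) → C' ∈ ({u,v,w} : Set (ℝ × ℝ)) →
      ∃ ℓ ∈ L, lf ℓ B' = 0 ∧ lf ℓ C' = 0 := by
    intro A' B' C' hd hperm hBm hCm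
    have hB'C' : B' ≠ C' := by
      rintro rfl
      apply hd
      unfold det3; ring
    apply seg_sub_line hB'C'
    intro z hz
    have hzK : z ∈ Kset L y := hsegsub B' C' hBm hCm hz
    have hzH : z ∉ Hset L y :=
      edge_not_mem_open hd (Hset_open L y) (by rw [hperm]; exact hHsub) hz
    exact exists_zero_line hy hzK hzH
  obtain ⟨p, hpL, hpv, hpw⟩ := findline u v w hdet rfl (by simp) (by simp)
  obtain ⟨q, hqL, hqu, hqw⟩ := findline v u w
    (by intro h0; apply hdet; unfold det3 at h0 ⊢; linarith [h0]) hset1 (by simp) (by simp)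
  obtain ⟨r, hrL, hru, hrv⟩ := findline w u v
    (by intro h0; apply hdet; unfold det3 at h0 ⊢; linarith [h0]) hset2 (by simp) (by simp)
  -- nonvanishing at the opposite vertices
  have hpu : lf p u ≠ 0 := fun h0 => hdet (det3_zero_of_line h0 hpv hpw)
  have hqv : lf q v ≠ 0 := fun h0 => hdet (det3_zero_of_line hqu h0 hqw)
  have hrw : lf r w ≠ 0 := fun h0 => hdet (det3_zero_of_line hru hrv h0)
  have huK : u ∈ Kset L y := by rw [← hCK]; exact subset_convexHull ℝ _ (by simp)
  have hvK : v ∈ Kset L y := by rw [← hCK]; exact subset_convexHull ℝ _ (by simp)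
  have hwK : w ∈ Kset L y := by rw [← hCK]; exact subset_convexHull ℝ _ (by simp)
  have hpuy : 0 < lf p u * lf p y :=
    lt_of_le_of_ne (huK p hpL) (Ne.symm (mul_ne_zero hpu (hy p hpL)))
  have hqvy : 0 < lf q v * lf q y :=
    lt_of_le_of_ne (hvK q hqL) (Ne.symm (mul_ne_zero hqv (hy q hqL)))
  have hrwy : 0 < lf r w * lf r y :=
    lt_of_le_of_ne (hwK r hrL) (Ne.symm (mul_ne_zero hrw (hy r hrL)))
  -- the sign case analysis
  rcases lt_or_gt_of_ne (mul_ne_zero (hx p hpL) (hy p hpL)) with hsp | hsp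
  · rcases lt_or_gt_of_ne (mul_ne_zero (hx q hqL) (hy q hqL)) with hsq | hsq
    · -- sp<0, sq<0 : kill with m=r
      exact (kill_case hx hPK hrL hpL hqL huv hru hrv
        hpv hpuy hqu hqvy hsp hsq (hall r hrL)).elim
    · rcases lt_or_gt_of_ne (mul_ne_zero (hx r hrL) (hy r hrL)) with hsr | hsr
      · -- sp<0, sq>0, sr<0 : kill with m=q
        exact (kill_case hx hPK hqL hpL hrL huw hqu hqw
          hpw hpuy hru hrwy hsp hsr (hall q hqL)).elim
      · -- sp<0, sq>0, sr>0 : main with m=p, (A,B,C) = (v,w,u)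
        exact main_case hL hx hy hPK hTK (by rw [hconv, ← hset4]) hpL hqL hrL
          hpv hpw hqw hrv hvw hqv hrw hsq hsr (hall p hpL)
  · rcases lt_or_gt_of_ne (mul_ne_zero (hx q hqL) (hy q hqL)) with hsq | hsq
    · rcases lt_or_gt_of_ne (mul_ne_zero (hx r hrL) (hy r hrL)) with hsr | hsr
      · -- sp>0, sq<0, sr<0 : kill with m=p
        exact (kill_case hx hPK hpL hqL hrL hvw hpv hpw
          hqw hqvy hrv hrwy hsq hsr (hall p hpL)).elim
      · -- sp>0, sq<0, sr>0 : main with m=q, (A,B,C) = (u,w,v)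
        exact main_case hL hx hy hPK hTK (by rw [hconv, ← hset3]) hqL hpL hrL
          hqu hqw hpw hru huw hpu hrw hsp hsr (hall q hqL)
    · -- sp>0, sq>0 : main with m=r, (A,B,C) = (u,v,w)
      exact main_case hL hx hy hPK hTK hconv hrL hpL hqL
        hru hrv hpv hqu huv hpu hqv hsp hsq (hall r hrL)
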